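/- In the setting of the linear relation among characteristic functions of types H^*_{a,c} in D = (ℤ/p^rℤ)² ⊕ (ℤ/p^{r'}ℤ)² (r ≥ r' ≥ 1), every element λ = x·(ap^{r-r'}, 0, 0, -1) + y·(0,1,a,0) with x ∈ ℤ/p^{r'}ℤ, y ∈ ℤ/p^rℤ, λ ≠ 0, lies in exactly p^{min(r_x, r_y)} of the subgroups H^1_{ã,1} (ã ∈ ℤ/p^{r'}ℤ), where p^{r_x} = gcd(x, p^{r'}) and p^{r_y} = gcd(y, p^{r'}). -/

import Mathlib

/-- The finite quadratic module `(ℤ/p^rℤ)² ⊕ (ℤ/p^{r'}ℤ)²`. -/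
abbrev Dty (N N' : ℕ) := (ZMod N × ZMod N) × (ZMod N' × ZMod N')

/-- The first generator `(a·p^{r-r'}, 0, 0, -1)` of `H¹_{a,1}`. -/
def G1 (p r r' : ℕ) (a : ℤ) : Dty (p ^ r) (p ^ r') :=
  ((((a * (p : ℤ) ^ (r - r') : ℤ) : ZMod (p ^ r)), (0 : ZMod (p ^ r))),
    ((0 : ZMod (p ^ r')), ((-1 : ℤ) : ZMod (p ^ r'))))

/-- The second generator `(0, 1, a, 0)` of `H¹_{a,1}`. -/
def G2 (p r r' : ℕ) (a : ℤ) : Dty (p ^ r) (p ^ r') :=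
  (((0 : ZMod (p ^ r)), (1 : ZMod (p ^ r))), ((a : ZMod (p ^ r')), (0 : ZMod (p ^ r'))))


lemma dvdAux (x n d : ℤ) (hn : n ≠ 0) : n ∣ x * d ↔ (n / (Int.gcd x n : ℤ)) ∣ d := by
  have hpos : 0 < Int.gcd x n := Int.gcd_pos_iff.mpr (Or.inr hn)
  have hg0 : (Int.gcd x n : ℤ) ≠ 0 := by exact_mod_cast hpos.ne'
  have hgx : (Int.gcd x n : ℤ) ∣ x := Int.gcd_dvd_left x n
  have hgn : (Int.gcd x n : ℤ) ∣ n := Int.gcd_dvd_right x n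
  set g : ℤ := (Int.gcd x n : ℤ) with hg
  have hco : IsCoprime (n / g) (x / g) := by
    rw [Int.isCoprime_iff_gcd_eq_one, Int.gcd_comm]
    exact Int.gcd_div_gcd_div_gcd hpos
  constructor
  · intro h
    have h2 : (n / g) * g ∣ (x / g) * g * d := by
      rwa [Int.ediv_mul_cancel hgn, Int.ediv_mul_cancel hgx]
    have h3 : (n / g) ∣ (x / g) * d :=
      (mul_dvd_mul_iff_right hg0).mp (by rwa [mul_right_comm] at h2)
    exact hco.dvd_of_dvd_mul_left h3
  · intro h
    have : (n / g) * g ∣ d * x := mul_dvd_mul h hgx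
    rwa [Int.ediv_mul_cancel hgn, mul_comm d x] at this

lemma countAux (k q a0 : ℕ) (hk : a0 < k) :
    (Finset.filter (fun t => t % k = a0) (Finset.range (k * q))).card = q := by
  have key : (Finset.filter (fun t => t % k = a0) (Finset.range (k * q))).card
      = (Finset.range q).card := by
    apply Finset.card_nbij' (fun t => t / k) (fun j => a0 + j * k)
    · intro t ht
      simp only [Finset.mem_coe, Finset.mem_filter, Finset.mem_range] at ht ⊢
      exact Nat.div_lt_of_lt_mul ht.1
    · intro j hj
      simp only [Finset.mem_coe, Finset.mem_filter, Finset.mem_range] at hj ⊢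
      constructor
      · calc a0 + j * k < k + j * k := by omega
          _ = (j + 1) * k := by ring
          _ ≤ q * k := Nat.mul_le_mul_right k hj
          _ = k * q := mul_comm _ _
      · rw [Nat.add_mul_mod_self_right, Nat.mod_eq_of_lt hk]
    · intro t ht
      simp only [Finset.mem_coe, Finset.mem_filter, Finset.mem_range] at ht
      dsimp only
      rw [← ht.2]
      rw [Nat.mod_add_div']
    · intro j hj
      dsimp only
      rw [Nat.add_mul_div_right _ _ (by omega : 0 < k), Nat.div_eq_of_lt hk, zero_add]
  rw [key, Finset.card_range]

lemma memAux (p r r' : ℕ) (hp0 : 0 < p) (hrr : r' ≤ r) (a x y t : ℤ) :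
    x • G1 p r r' a + y • G2 p r r' a ∈ AddSubgroup.closure {G1 p r r' t, G2 p r r' t} ↔
      ((p:ℤ) ^ r' ∣ x * (t - a) ∧ (p:ℤ) ^ r' ∣ y * (t - a)) := by
  have hPr : (p:ℤ) ^ r = (p:ℤ) ^ r' * (p:ℤ) ^ (r - r') := by
    rw [← pow_add]; congr 1; omega
  have hP0 : ((p:ℤ) ^ (r - r')) ≠ 0 := by positivity
  rw [AddSubgroup.mem_closure_pair]
  constructor
  · rintro ⟨m, n, h⟩
    simp only [G1, G2, Prod.smul_mk, Prod.mk_add_mk, smul_zero, add_zero, zero_add,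
      Prod.mk.injEq, zsmul_eq_mul, mul_one, mul_neg_one] at h
    obtain ⟨⟨h1, h2⟩, h3, h4⟩ := h
    have e1 : ((m * (t * (p:ℤ) ^ (r - r')) : ℤ) : ZMod (p ^ r))
        = ((x * (a * (p:ℤ) ^ (r - r')) : ℤ) : ZMod (p ^ r)) := by exact_mod_cast h1
    have e2 : ((n : ℤ) : ZMod (p ^ r)) = ((y : ℤ) : ZMod (p ^ r)) := by exact_mod_cast h2
    have e3 : ((n * t : ℤ) : ZMod (p ^ r')) = ((y * a : ℤ) : ZMod (p ^ r')) := by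
      push_cast; exact h3
    have e4 : ((m : ℤ) : ZMod (p ^ r')) = ((x : ℤ) : ZMod (p ^ r')) := by
      have := h4; push_cast at this
      rw [mul_neg_one, mul_neg_one] at this
      exact_mod_cast neg_inj.mp this
    have d1 : (p:ℤ) ^ r ∣ x * (a * (p:ℤ) ^ (r - r')) - m * (t * (p:ℤ) ^ (r - r')) := by
      have := Int.ModEq.dvd ((ZMod.intCast_eq_intCast_iff _ _ _).mp e1)
      exact_mod_cast this
    have d2 : (p:ℤ) ^ r ∣ y - n := by
      have := Int.ModEq.dvd ((ZMod.intCast_eq_intCast_iff _ _ _).mp e2)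
      exact_mod_cast this
    have d3 : (p:ℤ) ^ r' ∣ y * a - n * t := by
      have := Int.ModEq.dvd ((ZMod.intCast_eq_intCast_iff _ _ _).mp e3)
      exact_mod_cast this
    have d4 : (p:ℤ) ^ r' ∣ x - m := by
      have := Int.ModEq.dvd ((ZMod.intCast_eq_intCast_iff _ _ _).mp e4)
      exact_mod_cast this
    constructor
    · have hA : (p:ℤ) ^ r ∣ ((x - m) * t) * (p:ℤ) ^ (r - r') := by
        rw [hPr]; exact mul_dvd_mul (d4.mul_right t) dvd_rfl
      have hB : (p:ℤ) ^ r ∣ (x * (t - a)) * (p:ℤ) ^ (r - r') := by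
        have hh : (x * (t - a)) * (p:ℤ) ^ (r - r')
            = ((x - m) * t) * (p:ℤ) ^ (r - r')
              - (x * (a * (p:ℤ) ^ (r - r')) - m * (t * (p:ℤ) ^ (r - r'))) := by ring
        rw [hh]; exact dvd_sub hA d1
      rw [hPr] at hB
      exact (mul_dvd_mul_iff_right hP0).mp hB
    · have hC : (p:ℤ) ^ r' ∣ (y - n) * t := (dvd_trans (by rw [hPr]; exact dvd_mul_right _ _) d2).mul_right t
      have hh : y * (t - a) = (y - n) * t - (y * a - n * t) := by ring
      rw [hh]; exact dvd_sub hC d3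
  · rintro ⟨hx, hy⟩
    refine ⟨x, y, ?_⟩
    simp only [G1, G2, Prod.smul_mk, Prod.mk_add_mk, smul_zero, add_zero, zero_add,
      Prod.mk.injEq, zsmul_eq_mul, mul_one, mul_neg_one]
    refine ⟨⟨?_, trivial⟩, ?_, trivial⟩
    · have : ((x * (t * (p:ℤ) ^ (r - r')) : ℤ) : ZMod (p ^ r))
          = ((x * (a * (p:ℤ) ^ (r - r')) : ℤ) : ZMod (p ^ r)) := by
        rw [ZMod.intCast_eq_intCast_iff]
        refine (Int.modEq_iff_dvd.mpr ?_)
        have hh : x * (a * (p:ℤ) ^ (r - r')) - x * (t * (p:ℤ) ^ (r - r'))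
            = -(x * (t - a) * (p:ℤ) ^ (r - r')) := by ring
        rw [hh]
        push_cast
        rw [hPr]
        exact (mul_dvd_mul hx dvd_rfl).neg_right
      exact_mod_cast this
    · have : ((y * t : ℤ) : ZMod (p ^ r')) = ((y * a : ℤ) : ZMod (p ^ r')) := by
        rw [ZMod.intCast_eq_intCast_iff]
        refine (Int.modEq_iff_dvd.mpr ?_)
        have hh : y * a - y * t = -(y * (t - a)) := by ring
        rw [hh]; push_cast; exact hy.neg_right
      exact_mod_cast this

open Classical in
/-- a nonzero element `λ = x·(ap^{r-r'},0,0,-1) + y·(0,1,a,0)` lies in exactly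
`p^{min(r_x, r_y)}` of the subgroups `H¹_{ã,1}`, where `p^{r_x} = gcd(x, p^{r'})` and
`p^{r_y} = gcd(y, p^{r'})`. -/
theorem stmt8 (p r r' : ℕ) (hp : p.Prime) (h1 : 1 ≤ r') (hrr : r' ≤ r)
    (a x y : ℤ) (rx ry : ℕ)
    (hrx : Int.gcd x ((p : ℤ) ^ r') = p ^ rx)
    (hry : Int.gcd y ((p : ℤ) ^ r') = p ^ ry)
    (lam : Dty (p ^ r) (p ^ r'))
    (hlam : lam = x • G1 p r r' a + y • G2 p r r' a)
    (hne : lam ≠ 0) :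
    (Finset.filter
        (fun t : ℕ => lam ∈ AddSubgroup.closure {G1 p r r' (t : ℤ), G2 p r r' (t : ℤ)})
        (Finset.range (p ^ r'))).card = p ^ min rx ry := by
  classical
  have hp1 : 1 < p := hp.one_lt
  have hgx : ((p:ℤ) ^ rx) ∣ (p:ℤ) ^ r' := by
    have h := Int.gcd_dvd_right (a := x) (b := (p:ℤ) ^ r')
    rw [hrx] at h; exact_mod_cast h
  have hgy : ((p:ℤ) ^ ry) ∣ (p:ℤ) ^ r' := by
    have h := Int.gcd_dvd_right (a := y) (b := (p:ℤ) ^ r')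
    rw [hry] at h; exact_mod_cast h
  have hrxle : rx ≤ r' := (Nat.pow_dvd_pow_iff_le_right hp1).mp (by exact_mod_cast hgx)
  have hryle : ry ≤ r' := (Nat.pow_dvd_pow_iff_le_right hp1).mp (by exact_mod_cast hgy)
  set m := min rx ry with hm
  have hmle : m ≤ r' := le_trans (min_le_left _ _) hrxle
  have hdvd_iff : ∀ (z : ℤ) (rz : ℕ), Int.gcd z ((p:ℤ) ^ r') = p ^ rz → rz ≤ r' →
      ∀ d : ℤ, ((p:ℤ) ^ r' ∣ z * d ↔ (p:ℤ) ^ (r' - rz) ∣ d) := by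
    intro z rz hz hzle d
    have h := dvdAux z ((p:ℤ) ^ r') d (by positivity)
    rw [hz] at h
    have hq : ((p:ℤ) ^ r') / ((p ^ rz : ℕ) : ℤ) = (p:ℤ) ^ (r' - rz) := by
      have he : (p:ℤ) ^ r' = (p:ℤ) ^ (r' - rz) * (p:ℤ) ^ rz := by
        rw [← pow_add]; congr 1; omega
      push_cast
      rw [he, Int.mul_ediv_cancel _ (by positivity)]
    rw [hq] at h
    exact h
  have key : ∀ t : ℕ, (lam ∈ AddSubgroup.closure {G1 p r r' (t : ℤ), G2 p r r' (t : ℤ)}) ↔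
      (p:ℤ) ^ (r' - m) ∣ (t : ℤ) - a := by
    intro t
    rw [hlam, memAux p r r' hp.pos hrr a x y (t : ℤ),
      hdvd_iff x rx hrx hrxle, hdvd_iff y ry hry hryle]
    constructor
    · rintro ⟨h1, h2⟩
      rcases min_cases rx ry with ⟨hmin, _⟩ | ⟨hmin, _⟩
      · rw [hm, hmin]; exact h1
      · rw [hm, hmin]; exact h2
    · intro h
      exact ⟨dvd_trans (pow_dvd_pow _ (by omega)) h, dvd_trans (pow_dvd_pow _ (by omega)) h⟩
  set K := p ^ (r' - m) with hK
  have hK0 : 0 < K := pow_pos hp.pos _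
  have hKZ : ((K : ℕ) : ℤ) = (p:ℤ) ^ (r' - m) := by push_cast [hK]; ring
  set a0 := (a % (K : ℤ)).toNat with ha0
  have ha0eq : ((a0 : ℕ) : ℤ) = a % (K : ℤ) :=
    Int.toNat_of_nonneg (Int.emod_nonneg a (by exact_mod_cast hK0.ne'))
  have ha0lt : a0 < K := by
    have := Int.emod_lt_of_pos a (b := (K : ℤ)) (by exact_mod_cast hK0)
    omega
  have cond : ∀ t : ℕ, ((p:ℤ) ^ (r' - m) ∣ (t : ℤ) - a) ↔ t % K = a0 := by
    intro t
    rw [← hKZ, Int.dvd_iff_emod_eq_zero, Int.sub_emod, ← ha0eq,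
      ← Int.natCast_mod t K]
    constructor
    · intro h
      have h2 : ((t % K : ℕ) : ℤ) = ((a0 : ℕ) : ℤ) := by
        have hlt1 : ((t % K : ℕ) : ℤ) < (K : ℤ) := by
          exact_mod_cast Nat.mod_lt t hK0
        have hlt2 : ((a0 : ℕ) : ℤ) < (K : ℤ) := by exact_mod_cast ha0lt
        have hge1 : (0 : ℤ) ≤ ((t % K : ℕ) : ℤ) := by positivity
        have hge2 : (0 : ℤ) ≤ ((a0 : ℕ) : ℤ) := by positivity
        have hd : (K : ℤ) ∣ ((t % K : ℕ) : ℤ) - ((a0 : ℕ) : ℤ) :=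
          Int.dvd_of_emod_eq_zero h
        rcases hd with ⟨c, hc⟩
        have hKpos : (0 : ℤ) < (K : ℤ) := by exact_mod_cast hK0
        have hb1 : (K : ℤ) * c < (K : ℤ) * 1 := by rw [mul_one]; linarith
        have hb2 : (K : ℤ) * (-1) < (K : ℤ) * c := by
          have : (K : ℤ) * (-1) = -(K : ℤ) := by ring
          rw [this]; linarith
        have hc1 : c < 1 := lt_of_mul_lt_mul_left hb1 (le_of_lt hKpos)
        have hc2 : -1 < c := lt_of_mul_lt_mul_left hb2 (le_of_lt hKpos)
        have hc0 : c = 0 := by omega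
        rw [hc0, mul_zero] at hc
        omega
      exact_mod_cast h2
    · intro h
      rw [h, sub_self, Int.zero_emod]
  have hfilt : Finset.filter
        (fun t : ℕ => lam ∈ AddSubgroup.closure {G1 p r r' (t : ℤ), G2 p r r' (t : ℤ)})
        (Finset.range (p ^ r'))
      = Finset.filter (fun t => t % K = a0) (Finset.range (p ^ r')) := by
    apply Finset.filter_congr
    intro t _
    rw [key t, cond t]
  have hsplit : p ^ r' = K * p ^ m := by rw [hK, ← pow_add]; congr 1; omega
  rw [hfilt, hsplit, countAux K (p ^ m) a0 ha0lt]
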